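/- Let L = F_{q^n}, F = F_q, and let a, b ∈ L* span distinct points of PG(n-1,q). The image under the inversion j of the line through Fa and Fb is contained in a line (i.e., a 2-dimensional F-subspace) if and only if ab^{-1} lies in the unique subfield of L of order q² (in particular n must be even). -/

import Mathlib

open Polynomial
open Polynomial

-- smul defeq test

lemma subfield_mem_iff_pow {L : Type*} [Field L] [Fintype L] (K : Subfield L) (m : ℕ)
    (hK : Nat.card K = m) (x : L) : x ∈ K ↔ x ^ m = x := by
  classical
  have hm : 2 ≤ m := by
    have : Nontrivial K := inferInstance
    have h2 := Fintype.one_lt_card_iff_nontrivial.mpr this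
    rw [← hK, Nat.card_eq_fintype_card]
    omega
  have hfwd : ∀ y : L, y ∈ K → y ^ m = y := by
    intro y hy
    have h := FiniteField.pow_card (⟨y, hy⟩ : K)
    have hc : Fintype.card K = m := by rw [← Nat.card_eq_fintype_card, hK]
    rw [hc] at h
    exact_mod_cast congrArg (Subfield.subtype K) h
  constructor
  · exact hfwd x
  · intro hx
    set f : L[X] := X ^ m - X with hf
    have hdeg : f.natDegree = m := by
      rw [hf]
      rw [natDegree_sub_eq_left_of_natDegree_lt]
      · exact natDegree_X_pow m
      · simpa using by omega
    have hf0 : f ≠ 0 := by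
      intro h
      rw [h, natDegree_zero] at hdeg
      omega
    have hcard_le : f.roots.toFinset.card ≤ m :=
      le_trans (Multiset.toFinset_card_le _) (le_trans (Polynomial.card_roots' f) hdeg.le)
    have hsub : Set.toFinset (K : Set L) ⊆ f.roots.toFinset := by
      intro y hy
      rw [Set.mem_toFinset] at hy
      rw [Multiset.mem_toFinset, Polynomial.mem_roots hf0]
      simp [hf, Polynomial.IsRoot, hfwd y hy]
    have hcardK : (Set.toFinset (K : Set L)).card = m := by
      rw [Set.toFinset_card, ← hK, Nat.card_eq_fintype_card]
      rfl
    have heq : Set.toFinset (K : Set L) = f.roots.toFinset :=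
      Finset.eq_of_subset_of_card_le hsub (by omega)
    have : x ∈ f.roots.toFinset := by
      rw [Multiset.mem_toFinset, Polynomial.mem_roots hf0]
      simp [hf, Polynomial.IsRoot, hx]
    rw [← heq, Set.mem_toFinset] at this
    exact this

lemma quad_roots {L : Type*} [Field L] {y e x r1 r2 r : L} (hy : y ≠ 0)
    (h1 : y*r1^2 + e*r1 + x = 0) (h2 : y*r2^2 + e*r2 + x = 0) (hr : y*r^2 + e*r + x = 0)
    (h12 : r1 ≠ r2) : r = r1 ∨ r = r2 := by
  have hsum : y*(r1+r2) + e = 0 := by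
    have key : (r1 - r2) * (y*(r1+r2)+e) = 0 := by linear_combination h1 - h2
    rcases mul_eq_zero.mp key with h' | h'
    · exact absurd (sub_eq_zero.mp h') h12
    · exact h'
  have key2 : y * ((r - r1)*(r - r2)) = 0 := by
    linear_combination hr - h1 + (r1 - r) * hsum
  rcases mul_eq_zero.mp key2 with h' | h'
  · exact absurd h' hy
  · rcases mul_eq_zero.mp h' with h'' | h''
    · exact Or.inl (sub_eq_zero.mp h'')
    · exact Or.inr (sub_eq_zero.mp h'')


section defs
variable {L : Type*} [Field L]

/-- The subfield `C` viewed as an `F`-submodule of `L`, where `F ≤ C`. -/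
def sfSub (F C : Subfield L) (hFC : F ≤ C) : Submodule F L where
  carrier := C
  add_mem' := fun h h' => Subfield.add_mem C h h'
  zero_mem' := Subfield.zero_mem C
  smul_mem' := fun t x hx => Subfield.mul_mem C (hFC t.2) hx

/-- Multiplication by a fixed element of `L`, as an `F`-linear map. -/
def mulL (F : Subfield L) (c : L) : L →ₗ[F] L where
  toFun := fun x => c * x
  map_add' := fun x y => mul_add _ x y
  map_smul' := fun t x => by show c * ((t : L) * x) = (t : L) * (c * x); ring

lemma mem_sfSub {F C : Subfield L} {hFC : F ≤ C} {x : L} :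
    x ∈ sfSub F C hFC ↔ x ∈ C := Iff.rfl

lemma finrank_sfSub [Fintype L] (F C : Subfield L) (hFC : F ≤ C) {q : ℕ} (hq2 : 2 ≤ q)
    (hF : Nat.card F = q) (hC : Nat.card C = q ^ 2) :
    Module.finrank F (sfSub F C hFC) = 2 := by
  classical
  have hcardV : Fintype.card (sfSub F C hFC) =
      Fintype.card F ^ Module.finrank F (sfSub F C hFC) := Module.card_eq_pow_finrank
  have hcV : Fintype.card (sfSub F C hFC) = q ^ 2 := by
    rw [← hC, Nat.card_eq_fintype_card]
    exact (Fintype.card_congr (Equiv.subtypeEquivRight fun x => Iff.rfl)).symm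
  have hcF : Fintype.card F = q := by rw [← hF, Nat.card_eq_fintype_card]
  rw [hcV, hcF] at hcardV
  exact (Nat.pow_right_injective hq2 hcardV).symm

end defs

/-- Let `Fa ≠ Fb` be distinct points of `PG(n-1, q)`.  The image under the
inversion `j` of the line through `Fa` and `Fb` is contained in a line (a
2-dimensional `F`-subspace) if and only if `ab⁻¹` lies in the unique subfield
`C` of `L` of order `q²` (in particular `n` must be even). -/
theorem stmt8 (q n : ℕ) (hq : IsPrimePow q) (hn : 2 ≤ n) (hneven : Even n)
    (L : Type*) [Field L] [Fintype L] (F C : Subfield L) (hFC : F ≤ C)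
    (hL : Nat.card L = q ^ n) (hF : Nat.card F = q) (hC : Nat.card C = q ^ 2)
    (a b : L) (ha : a ≠ 0) (hb : b ≠ 0)
    (hab : Submodule.span F {a} ≠ Submodule.span F {b}) :
    (∃ W : Submodule F L, Module.finrank F W = 2 ∧
        ∀ t u : F, ¬(t = 0 ∧ u = 0) → ((t : L) * a + (u : L) * b)⁻¹ ∈ W)
      ↔ a * b⁻¹ ∈ C := by
  classical
  have hq2 : 2 ≤ q := hq.two_le
  -- characteristic setup
  obtain ⟨p, k, hp, hk, hpk⟩ := hq
  have hp' : p.Prime := Nat.prime_iff.mpr hp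
  haveI : CharP L (ringChar L) := ringChar.charP L
  have hpr : (ringChar L).Prime := CharP.char_is_prime L (ringChar L)
  obtain ⟨m, -, hm⟩ := FiniteField.card L (ringChar L)
  have hcardL : Fintype.card L = q ^ n := by rw [← Nat.card_eq_fintype_card, hL]
  have hpq : p = ringChar L := by
    have h1 : p ^ (k * n) = (ringChar L) ^ (m : ℕ) := by
      rw [pow_mul, hpk, ← hcardL, hm]
    have h2 : p ∣ (ringChar L) ^ (m : ℕ) := by
      rw [← h1]
      exact dvd_pow_self p (by positivity)
    exact (Nat.prime_dvd_prime_iff_eq hp' hpr).mp (hp'.dvd_of_dvd_pow h2)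
  haveI : CharP L p := hpq ▸ ringChar.charP L
  haveI : Fact p.Prime := ⟨hp'⟩
  have frob : ∀ x y : L, (x + y) ^ q = x ^ q + y ^ q := by
    intro x y
    rw [← hpk]
    exact add_pow_char_pow x y p k
  have frob_inj : ∀ x y : L, x ^ q = y ^ q → x = y := by
    intro x y h
    have hs : (x - y) ^ q = x ^ q - y ^ q := by rw [← hpk]; exact sub_pow_char_pow x y k
    rw [h, sub_self] at hs
    exact sub_eq_zero.mp (pow_eq_zero_iff (n := q) (by omega) |>.mp hs)
  have hFpow : ∀ t : F, ((t : L)) ^ q = (t : L) := fun t =>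
    (subfield_mem_iff_pow F q hF _).mp t.2
  have hCmem : ∀ x : L, x ∈ C ↔ x ^ (q ^ 2) = x := subfield_mem_iff_pow C (q ^ 2) hC
  have hne : ∀ t u : F, ¬(t = 0 ∧ u = 0) → (t : L) * a + (u : L) * b ≠ 0 := by
    intro t u htu heq
    by_cases hu : u = 0
    · have ht : t ≠ 0 := fun h => htu ⟨h, hu⟩
      rw [hu] at heq
      push_cast at heq
      simp at heq
      rcases heq with h | h
      · exact ht (by exact_mod_cast h)
      · exact ha h
    · have ht : t ≠ 0 := by
        intro h
        rw [h] at heq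
        push_cast at heq
        simp at heq
        rcases heq with h' | h'
        · exact hu (by exact_mod_cast h')
        · exact hb h'
      have hc0 : (-(u⁻¹ * t) : F) ≠ 0 := by simp [hu, ht]
      have hu' : (u : L) ≠ 0 := fun h => hu (by exact_mod_cast h)
      have hb' : b = (-(u⁻¹ * t) : F) • a := by
        show b = ((-(u⁻¹ * t) : F) : L) * a
        push_cast
        field_simp
        linear_combination heq
      apply hab
      rw [hb']
      exact (Submodule.span_singleton_smul_eq (isUnit_iff_ne_zero.mpr hc0) a).symm
  constructor
  · -- forward direction
    rintro ⟨W, hW2, hWmem⟩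
    haveI : Module.Finite F L := Module.finite_iff_finite.mpr inferInstance
    have m1 : a⁻¹ ∈ W := by
      have h := hWmem 1 0 (by simp)
      push_cast at h
      simpa using h
    have m2 : b⁻¹ ∈ W := by
      have h := hWmem 0 1 (by simp)
      push_cast at h
      simpa using h
    have m3 : (a + b)⁻¹ ∈ W := by
      have h := hWmem 1 1 (by simp)
      push_cast at h
      simpa using h
    have hab0 : a + b ≠ 0 := by
      have h := hne 1 1 (by simp)
      push_cast at h
      simpa using h
    set v : Fin 3 → W := ![⟨a⁻¹, m1⟩, ⟨b⁻¹, m2⟩, ⟨(a + b)⁻¹, m3⟩] with hv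
    have hnli : ¬ LinearIndependent F v := by
      intro h
      have := h.fintype_card_le_finrank
      rw [hW2] at this
      simp at this
    obtain ⟨g, hg0, i, hgi⟩ := Fintype.not_linearIndependent_iff.mp hnli
    have hsum : (g 0 : L) * a⁻¹ + (g 1 : L) * b⁻¹ + (g 2 : L) * (a + b)⁻¹ = 0 := by
      have h := congrArg (Subtype.val) hg0
      push_cast [Fin.sum_univ_three, hv] at h
      convert h using 2 <;> rfl
    set c := a * b⁻¹ with hcdef
    have hc0 : c ≠ 0 := mul_ne_zero ha (inv_ne_zero hb)
    have hcb : c * b = a := by rw [hcdef]; field_simp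
    have h1 : (g 1 : L) * a ^ 2 + ((g 0 : L) + g 1 + g 2) * (a * b) + (g 0 : L) * b ^ 2 = 0 := by
      field_simp at hsum
      linear_combination hsum
    have hquad : (g 1 : L) * c ^ 2 + ((g 0 : L) + g 1 + g 2) * c + (g 0 : L) = 0 := by
      have hb2 : (b : L) ^ 2 ≠ 0 := pow_ne_zero 2 hb
      have key : ((g 1 : L) * c ^ 2 + ((g 0 : L) + g 1 + g 2) * c + (g 0 : L)) * b ^ 2 = 0 := by
        have expand : ((g 1 : L) * c ^ 2 + ((g 0 : L) + g 1 + g 2) * c + (g 0 : L)) * b ^ 2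
            = (g 1 : L) * (c * b) ^ 2 + ((g 0 : L) + g 1 + g 2) * ((c * b) * b)
              + (g 0 : L) * b ^ 2 := by ring
        rw [expand, hcb]
        linear_combination h1
      rcases mul_eq_zero.mp key with h | h
      · exact h
      · exact absurd h hb2
    by_cases hβ0 : g 1 = 0
    · -- degenerate linear case
      have hlin : ((g 0 : L) + g 2) * c + (g 0 : L) = 0 := by
        rw [hβ0] at hquad
        push_cast at hquad
        linear_combination hquad
      by_cases hα0 : g 0 = 0
      · exfalso
        have hγ : (g 2 : L) * c = 0 := by
          rw [hα0] at hlin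
          push_cast at hlin
          linear_combination hlin
        rcases mul_eq_zero.mp hγ with h | h
        · have hγ0 : g 2 = 0 := by exact_mod_cast h
          have : g i = 0 := by
            match i with
            | 0 => exact hα0
            | 1 => exact hβ0
            | 2 => exact hγ0
          exact hgi this
        · exact hc0 h
      · by_cases hs : (g 0 : L) + g 2 = 0
        · exact absurd (by exact_mod_cast (by linear_combination hlin - c * hs :
            (g 0 : L) = 0)) hα0
        · have hcF : c = ((-(g 0) / (g 0 + g 2) : F) : L) := by
            push_cast
            rw [eq_div_iff hs]
            linear_combination hlin
          rw [hcF]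
          exact hFC (SetLike.coe_mem _)
    · -- quadratic case: Frobenius argument
      have hβL : ((g 1 : F) : L) ≠ 0 := fun h => hβ0 (by exact_mod_cast h)
      set e : F := g 0 + g 1 + g 2 with he
      have hquad' : (g 1 : L) * c ^ 2 + (e : L) * c + (g 0 : L) = 0 := by
        rw [he]
        push_cast
        linear_combination hquad
      have hroot : ∀ z : L, (g 1 : L) * z ^ 2 + (e : L) * z + (g 0 : L) = 0 →
          (g 1 : L) * (z ^ q) ^ 2 + (e : L) * z ^ q + (g 0 : L) = 0 := by
        intro z hz
        have expand : ((g 1 : L) * z ^ 2 + (e : L) * z + (g 0 : L)) ^ q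
            = (g 1 : L) * (z ^ q) ^ 2 + (e : L) * z ^ q + (g 0 : L) := by
          rw [frob, frob, mul_pow, mul_pow, hFpow, hFpow, hFpow, ← pow_mul, mul_comm 2 q,
            pow_mul]
        rw [hz, zero_pow (by omega)] at expand
        exact expand.symm
      by_cases hcq : c ^ q = c
      · exact hFC ((subfield_mem_iff_pow F q hF c).mpr hcq)
      · have h2 := hroot c hquad'
        have h3 := hroot _ h2
        rcases quad_roots hβL hquad' h2 h3 (fun h => hcq h.symm) with h | h
        · apply (hCmem c).mpr
          have hqq : q ^ 2 = q * q := by ring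
          rw [hqq, pow_mul]
          exact h
        · exact absurd (frob_inj _ _ h) hcq
  · -- backward direction
    intro hc
    refine ⟨(sfSub F C hFC).map (mulL F b⁻¹), ?_, ?_⟩
    · have hinj : Function.Injective (mulL F b⁻¹) := fun x y h =>
        mul_left_cancel₀ (inv_ne_zero hb) h
      rw [← (Submodule.equivMapOfInjective (mulL F b⁻¹) hinj (sfSub F C hFC)).finrank_eq]
      exact finrank_sfSub F C hFC hq2 hF hC
    · intro t u htu
      have key : (t : L) * a + (u : L) * b = ((t : L) * (a * b⁻¹) + u) * b := by
        field_simp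
      have hzC : (t : L) * (a * b⁻¹) + u ∈ C := C.add_mem (C.mul_mem (hFC t.2) hc) (hFC u.2)
      refine Submodule.mem_map.mpr ⟨((t : L) * (a * b⁻¹) + u)⁻¹, C.inv_mem hzC, ?_⟩
      show b⁻¹ * ((t : L) * (a * b⁻¹) + u)⁻¹ = ((t : L) * a + (u : L) * b)⁻¹
      rw [key, mul_inv, mul_comm]
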